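/- For all positive integers r and n with r odd, L_r * (∑_{k=1}^n F_{2rk}) = F_{rn} * L_{rn+r} if n is even, and L_r * (∑_{k=1}^n F_{2rk}) = L_{rn} * F_{rn+r} if n is odd. -/

import Mathlib

open Finset

def L : ℕ → ℤ
  | 0 => 2
  | 1 => 1
  | n + 2 => L (n + 1) + L n

def F (n : ℕ) : ℤ := Nat.fib n

lemma Frec (n : ℕ) : F (n + 2) = F (n + 1) + F n := by
  simp [F, Nat.fib_add_two]; ring

lemma Lrec (n : ℕ) : L (n + 2) = L (n + 1) + L n := rfl

lemma twoF : ∀ m, 2 * F (m + 1) = F m + L m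
  | 0 => by simp [F, L]
  | 1 => by norm_num [F, L]
  | (m+2) => by
    have h1 := twoF m
    have h2 : 2 * F (m+2) = F (m+1) + L (m+1) := twoF (m+1)
    have e1 : F (m+3) = F (m+2) + F (m+1) := Frec (m+1)
    have e0 : F (m+2) = F (m+1) + F m := Frec m
    show 2 * F (m+3) = F (m+2) + L (m+2)
    rw [e1, Frec, Lrec]
    linarith

lemma twoL : ∀ m, 2 * L (m + 1) = L m + 5 * F m
  | 0 => by norm_num [F, L]
  | 1 => by norm_num [F, L]
  | (m+2) => by
    have h1 := twoL m
    have h2 : 2 * L (m+2) = L (m+1) + 5 * F (m+1) := twoL (m+1)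
    have e1 : L (m+3) = L (m+2) + L (m+1) := Lrec (m+1)
    have e0 : L (m+2) = L (m+1) + L m := Lrec m
    show 2 * L (m+3) = L (m+2) + 5 * F (m+2)
    rw [e1, Lrec, Frec]
    linarith

lemma hF1 : F 1 = 1 := by norm_num [F]

lemma addF (m : ℕ) : ∀ n, 2 * F (m + n) = F m * L n + L m * F n
  | 0 => by simp [F, L]; ring
  | 1 => by
    have h := twoF m
    have hL1 : L 1 = 1 := rfl
    show 2 * F (m + 1) = F m * L 1 + L m * F 1
    rw [hF1, hL1]; linarith
  | (n+2) => by
    have h1 := addF m n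
    have h2 : 2 * F (m + n + 1) = F m * L (n+1) + L m * F (n+1) := addF m (n+1)
    have e : F (m + n + 2) = F (m + n + 1) + F (m + n) := Frec (m+n)
    show 2 * F (m + n + 2) = F m * L (n+2) + L m * F (n+2)
    rw [e, Lrec, Frec]
    linear_combination h1 + h2

lemma addL (m : ℕ) : ∀ n, 2 * L (m + n) = L m * L n + 5 * F m * F n
  | 0 => by simp [F, L]; ring
  | 1 => by
    have h := twoL m
    have hL1 : L 1 = 1 := rfl
    show 2 * L (m + 1) = L m * L 1 + 5 * F m * F 1
    rw [hF1, hL1]; linarith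
  | (n+2) => by
    have h1 := addL m n
    have h2 : 2 * L (m + n + 1) = L m * L (n+1) + 5 * F m * F (n+1) := addL m (n+1)
    have e : L (m + n + 2) = L (m + n + 1) + L (m + n) := Lrec (m+n)
    show 2 * L (m + n + 2) = L m * L (n+2) + 5 * F m * F (n+2)
    rw [e, Lrec, Frec]
    linear_combination h1 + h2

lemma cassini : ∀ n, F (n+1)^2 - F (n+1) * F n - F n ^ 2 = (-1 : ℤ)^n
  | 0 => by simp [F]
  | (n+1) => by
    have h := cassini n
    rw [Frec, show ((-1 : ℤ))^(n+1) = -(-1)^n by ring]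
    linear_combination -h

lemma pell (n : ℕ) : L n ^ 2 - 5 * F n ^ 2 = 4 * (-1 : ℤ) ^ n := by
  have h := cassini n
  have h1 := twoF n
  linear_combination (-(L n + 2*F (n+1) - F n))*h1 + 4*h

lemma doubF (t : ℕ) : F (2*t) = F t * L t := by
  have h := addF t t
  rw [show t + t = 2*t by ring] at h
  linarith

lemma lemA (s : ℕ) (hs : Odd s) (m : ℕ) : F (m + 2*s) = F m + F (m + s) * L s := by
  have h1 := addF m (2*s)
  have h2 := addF m s
  have h5 := addF s s
  have h6 := addL s s
  have hp := pell s
  rw [Odd.neg_one_pow hs] at hp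
  rw [show s + s = 2*s by ring] at h5 h6
  have h4 : 4 * F (m + 2*s) = 4 * (F m + F (m + s) * L s) := by
    linear_combination 2*h1 - 2*(L s)*h2 + (F m)*h6 - (F m)*hp + (L m)*h5
  linarith

lemma lemB (s : ℕ) (hs : Odd s) (m : ℕ) : L (m + 2*s) = L m + L (m + s) * L s := by
  have h1 := addL m (2*s)
  have h2 := addL m s
  have h5 := addF s s
  have h6 := addL s s
  have hp := pell s
  rw [Odd.neg_one_pow hs] at hp
  rw [show s + s = 2*s by ring] at h5 h6
  have h4 : 4 * L (m + 2*s) = 4 * (L m + L (m + s) * L s) := by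
    linear_combination 2*h1 - 2*(L s)*h2 + (L m)*h6 - (L m)*hp + 5*(F m)*h5
  linarith

theorem stmt1 (r n : ℕ) (hr : 0 < r) (hn : 0 < n) (hro : Odd r) :
    (Even n → L r * ∑ k ∈ Finset.Icc 1 n, F (2 * r * k) = F (r * n) * L (r * n + r)) ∧
    (Odd n → L r * ∑ k ∈ Finset.Icc 1 n, F (2 * r * k) = L (r * n) * F (r * n + r)) := by
  induction n, hn using Nat.le_induction with
  | base =>
    constructor
    · intro h; simp at h
    · intro _
      simp only [Finset.Icc_self, Finset.sum_singleton, mul_one, Nat.mul_one]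
      rw [two_mul]
  | succ n hn ih =>
    have hsum : ∑ k ∈ Finset.Icc 1 (n+1), F (2 * r * k)
        = (∑ k ∈ Finset.Icc 1 n, F (2 * r * k)) + F (2 * r * (n+1)) :=
      Finset.sum_Icc_succ_top (by omega) _
    have hC : F (2*(r*n + r)) = F (r*n + r) * L (r*n + r) := doubF _
    rcases Nat.even_or_odd n with he | ho
    · have key := ih.1 he
      constructor
      · intro h
        obtain ⟨a, ha⟩ := he; obtain ⟨b, hb⟩ := h; omega
      · intro _
        rw [hsum, mul_add, key,
          show 2*r*(n+1) = 2*(r*n + r) by ring,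
          show r*(n+1) = r*n + r by ring,
          show r*n + r + r = r*n + 2*r by ring,
          lemA r hro (r*n), hC]
        ring
    · have key := ih.2 ho
      constructor
      · intro _
        rw [hsum, mul_add, key,
          show 2*r*(n+1) = 2*(r*n + r) by ring,
          show r*(n+1) = r*n + r by ring,
          show r*n + r + r = r*n + 2*r by ring,
          lemB r hro (r*n), hC]
        ring
      · intro h
        obtain ⟨a, ha⟩ := ho; obtain ⟨b, hb⟩ := h; omega
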